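/- For d ≥ 2 and λ, γ ∈ [0,1], the inequality γ ≤ (1/d)[(d−2)(1−λ) + 2√((1−d)λ² + (d−2)λ + 1)] holds if and only if either γ + λ ≤ 1, or γ² + λ² + (2(d−2)/d)(1−γ)(1−λ) ≤ 1. -/

import Mathlib

set_option maxHeartbeats 1000000


theorem boundary_curve_symmetric_form (d : ℕ) (hd : 2 ≤ d) (l g : ℝ)
    (hl : 0 ≤ l) (hl1 : l ≤ 1) (hg : 0 ≤ g) (hg1 : g ≤ 1) :
    g ≤ (1 / d) * ((d - 2) * (1 - l) +
        2 * Real.sqrt ((1 - d) * l ^ 2 + (d - 2) * l + 1)) ↔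
      (g + l ≤ 1 ∨
        g ^ 2 + l ^ 2 + (2 * (d - 2) / d) * (1 - g) * (1 - l) ≤ 1) := by
  have hD : (2:ℝ) ≤ (d:ℝ) := by exact_mod_cast hd
  have hDpos : (0:ℝ) < (d:ℝ) := by linarith
  set R : ℝ := (1 - (d:ℝ)) * l ^ 2 + ((d:ℝ) - 2) * l + 1 with hRdef
  set T : ℝ := (d:ℝ) * (g ^ 2 + l ^ 2 - 1) + 2 * ((d:ℝ) - 2) * (1 - g) * (1 - l)
    with hTdef
  have hR0 : 0 ≤ R := by
    have : R = (1 - l) * (1 + ((d:ℝ) - 1) * l) := by rw [hRdef]; ring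
    rw [this]
    apply mul_nonneg (by linarith)
    nlinarith
  have hsq : Real.sqrt R ^ 2 = R := Real.sq_sqrt hR0
  have hs0 : 0 ≤ Real.sqrt R := Real.sqrt_nonneg R
  have hid : ((d:ℝ) * g - ((d:ℝ) - 2) * (1 - l)) ^ 2 - 4 * R = (d:ℝ) * T := by
    rw [hRdef, hTdef]; ring
  have hQT : g ^ 2 + l ^ 2 + (2 * ((d:ℝ) - 2) / (d:ℝ)) * (1 - g) * (1 - l) ≤ 1 ↔
      T ≤ 0 := by
    have hfrac : g ^ 2 + l ^ 2 + (2 * ((d:ℝ) - 2) / (d:ℝ)) * (1 - g) * (1 - l) - 1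
        = T / (d:ℝ) := by
      rw [hTdef]; field_simp; ring
    rw [← sub_nonpos, hfrac, div_le_iff₀ hDpos, zero_mul]
  have key : g ≤ (1 / d) * (((d:ℝ) - 2) * (1 - l) + 2 * Real.sqrt R) ↔
      (d:ℝ) * g - ((d:ℝ) - 2) * (1 - l) ≤ 2 * Real.sqrt R := by
    rw [one_div, inv_mul_eq_div, le_div_iff₀ hDpos]
    constructor <;> intro h <;> nlinarith
  rw [key, hQT]
  constructor
  · intro h
    rcases le_or_gt ((d:ℝ) * g - ((d:ℝ) - 2) * (1 - l)) 0 with h0 | h0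
    · left; nlinarith
    · right; nlinarith
  · intro h
    rcases le_or_gt ((d:ℝ) * g - ((d:ℝ) - 2) * (1 - l)) 0 with h0 | h0
    · nlinarith
    · have hSsq : ((d:ℝ) * g - ((d:ℝ) - 2) * (1 - l)) ^ 2 ≤ 4 * R := by
        rcases h with h | h
        · have h1 : (d:ℝ) * g - ((d:ℝ) - 2) * (1 - l) ≤ 2 * (1 - l) := by nlinarith
          have h2 : 4 * (1 - l) ^ 2 ≤ 4 * R := by
            have hx := mul_nonneg (mul_nonneg (sub_nonneg.2 hl1) hDpos.le) hl
            rw [hRdef]; nlinarith [hx]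
          have h3 := mul_self_le_mul_self h0.le h1
          nlinarith [h3]
        · have hdT : (d:ℝ) * T ≤ 0 := mul_nonpos_of_nonneg_of_nonpos hDpos.le h
          linarith
      calc (d:ℝ) * g - ((d:ℝ) - 2) * (1 - l)
          = Real.sqrt (((d:ℝ) * g - ((d:ℝ) - 2) * (1 - l)) ^ 2) :=
            (Real.sqrt_sq h0.le).symm
        _ ≤ Real.sqrt (4 * R) := Real.sqrt_le_sqrt hSsq
        _ = 2 * Real.sqrt R := by
            rw [show (4:ℝ) * R = (2 * Real.sqrt R) ^ 2 by rw [mul_pow]; rw [hsq]; ring]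
            exact Real.sqrt_sq (by positivity)
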